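/- Let X be a proper, geodesic metric space with a stably visible compactification X̄. Then for each x ∈ X the function D : ∂X × ∂X → ℝ ∪ {∞} defined by D(ξ, η) := sup_{γ ∈ P(ξ,η)} d(x, γ) (with D(ξ, η) = ∞ when P(ξ, η) = ∅) is measurable with respect to the Borel σ-algebra of ∂X × ∂X. -/

import Mathlib

open Filter Topology
open scoped ENNReal Classical

/-- `f` is a geodesic segment from `u` to `v`, parametrized by arclength on
`[0, d(u,v)]`. -/
def IsGeodesicFrom {X : Type*} [MetricSpace X] (f : ℝ → X) (u v : X) : Prop :=
  f 0 = u ∧ f (dist u v) = v ∧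
    ∀ s ∈ Set.Icc (0 : ℝ) (dist u v), ∀ t ∈ Set.Icc (0 : ℝ) (dist u v),
      dist (f s) (f t) = |s - t|

/-- A metric space is geodesic if any two points are joined by a geodesic segment. -/
def GeodesicSpace (X : Type*) [MetricSpace X] : Prop :=
  ∀ u v : X, ∃ f : ℝ → X, IsGeodesicFrom f u v

/-- A compactification `ι : X → Y` is *stably visible* if every sequence of geodesic
segments whose endpoints converge to two distinct boundary points intersects some
bounded subset of `X`. -/
def StablyVisible {X Y : Type*} [MetricSpace X] [TopologicalSpace Y] (ι : X → Y) : Prop :=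
  ∀ ξ η : Y, ξ ∉ Set.range ι → η ∉ Set.range ι → ξ ≠ η →
    ∀ (a b : ℕ → X) (f : ℕ → ℝ → X),
      (∀ n, IsGeodesicFrom (f n) (a n) (b n)) →
      Tendsto (fun n => ι (a n)) atTop (𝓝 η) →
      Tendsto (fun n => ι (b n)) atTop (𝓝 ξ) →
      ∃ B : Set X, Bornology.IsBounded B ∧
        ∀ n, ∃ t ∈ Set.Icc (0 : ℝ) (dist (a n) (b n)), f n t ∈ B

/-- The pencil `P(ξ, η)`: the set of geodesic lines `γ : ℝ → X` with `γ(t) → ξ` as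
`t → ∞` and `γ(t) → η` as `t → −∞` (limits taken in the compactification `Y`). -/
def pencil {X Y : Type*} [MetricSpace X] [TopologicalSpace Y] (ι : X → Y) (ξ η : Y) :
    Set (ℝ → X) :=
  {γ | Isometry γ ∧ Tendsto (fun t => ι (γ t)) atTop (𝓝 ξ) ∧
    Tendsto (fun t => ι (γ t)) atBot (𝓝 η)}

/-- `D(ξ, η) := sup_{γ ∈ P(ξ,η)} d(x, γ)`, with the convention `D(ξ, η) = ∞` when
`P(ξ, η) = ∅`. -/
noncomputable def pencilSup {X Y : Type*} [MetricSpace X] (x : X)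
    (Pen : Y → Y → Set (ℝ → X)) (ξ η : Y) : ℝ≥0∞ :=
  if Pen ξ η = ∅ then ⊤ else ⨆ γ ∈ Pen ξ η, EMetric.infEdist x (Set.range γ)


set_option linter.unusedSectionVars false
set_option linter.unusedVariables false
set_option maxHeartbeats 1000000

section Basis

variable {Y : Type*} [TopologicalSpace Y]


variable {Y : Type*} [TopologicalSpace Y]

lemma exists_open_antitone_basis' [FirstCountableTopology Y] (ξ : Y) :
    ∃ V : ℕ → Set Y, (∀ k, IsOpen (V k)) ∧ (∀ k, ξ ∈ V k) ∧ Antitone V ∧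
      ∀ S ∈ 𝓝 ξ, ∃ k, V k ⊆ S := by
  obtain ⟨W, hW⟩ := (𝓝 ξ).exists_antitone_basis
  have h : ∀ k, ∃ O, O ⊆ W k ∧ IsOpen O ∧ ξ ∈ O := fun k => mem_nhds_iff.1 (hW.mem k)
  choose O hO1 hO2 hO3 using h
  refine ⟨fun k => ⋂ i ∈ Finset.range (k + 1), O i, ?_, ?_, ?_, ?_⟩
  · exact fun k => isOpen_biInter_finset fun i _ => hO2 i
  · exact fun k => Set.mem_iInter₂.2 fun i _ => hO3 i
  · intro k l hkl y hy
    rw [Set.mem_iInter₂] at *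
    intro i hi
    exact hy i (Finset.mem_range.2 (lt_of_lt_of_le (Finset.mem_range.1 hi) (by omega)))
  · intro S hS
    obtain ⟨k, -, hk⟩ := hW.1.mem_iff.1 hS
    refine ⟨k, (Set.biInter_subset_of_mem (Finset.self_mem_range_succ k)).trans
      ((hO1 k).trans hk)⟩

lemma tendsto_of_mem_basis' {ξ : Y} {V : ℕ → Set Y} (hVa : Antitone V)
    (hVb : ∀ S ∈ 𝓝 ξ, ∃ k, V k ⊆ S) {y : ℕ → Y} (hy : ∀ k, y k ∈ V k) :
    Tendsto y atTop (𝓝 ξ) := by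
  intro S hS
  obtain ⟨k0, hk0⟩ := hVb S hS
  exact mem_map.2 (eventually_atTop.2 ⟨k0, fun k hk => hk0 (hVa hk (hy k))⟩)

lemma seq_of_mapClusterPt' [FirstCountableTopology Y] {I : Type*} [SemilatticeSup I]
    [Nonempty I] {ζ : Y} {u : I → Y} (h : MapClusterPt ζ atTop u) (e : ℕ → I) :
    ∃ n : ℕ → I, (∀ k, e k ≤ n k) ∧ Tendsto (u ∘ n) atTop (𝓝 ζ) := by
  obtain ⟨V, hVo, hVm, hVa, hVb⟩ := exists_open_antitone_basis' ζ
  have hfreq : ∀ k : ℕ, ∃ i, e k ≤ i ∧ u i ∈ V k := by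
    intro k
    have := mapClusterPt_iff_frequently.1 h (V k) ((hVo k).mem_nhds (hVm k))
    obtain ⟨i, hi1, hi2⟩ := frequently_atTop.1 this (e k)
    exact ⟨i, hi1, hi2⟩
  choose n hn1 hn2 using hfreq
  exact ⟨n, hn1, tendsto_of_mem_basis' hVa hVb hn2⟩

lemma tendsto_of_unique_clusterPt' {Z : Type*} [TopologicalSpace Z] [CompactSpace Z]
    [T2Space Z] {F : Filter Z} [NeBot F] {ξ : Z} (h : ∀ ζ, ClusterPt ζ F → ζ = ξ) :
    F ≤ 𝓝 ξ := by
  by_contra hF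
  obtain ⟨U, hU, hUF⟩ : ∃ U ∈ 𝓝 ξ, U ∉ F := by
    by_contra h'
    push_neg at h'
    exact hF fun U hU => h' U hU
  obtain ⟨C, ⟨hCn, hCc⟩, hCU⟩ := (closed_nhds_basis ξ).mem_iff.1 hU
  have hCF : C ∉ F := fun h' => hUF (F.sets_of_superset h' hCU)
  have hne : NeBot (F ⊓ 𝓟 Cᶜ) := by
    rw [neBot_iff]
    intro h0
    rw [inf_principal_eq_bot, compl_compl] at h0
    exact hCF h0
  obtain ⟨ζ, hζ⟩ := exists_clusterPt_of_compactSpace (F ⊓ 𝓟 Cᶜ)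
  have h1 : ζ = ξ := h ζ (hζ.mono inf_le_left)
  have h3 : ζ ∈ closure Cᶜ :=
    mem_closure_iff_clusterPt.2 (hζ.mono inf_le_right)
  rw [h1, closure_compl] at h3
  exact h3 (mem_interior_iff_mem_nhds.2 hCn)


end Basis

section Geo

variable {X Y : Type*} [MetricSpace X] [ProperSpace X]
  [TopologicalSpace Y] [T2Space Y] [SecondCountableTopology Y] [CompactSpace Y]
  {ι : X → Y}

lemma Isometry.isGeodesicFrom {γ : ℝ → X} (hγ : Isometry γ) {s t : ℝ} (hst : s ≤ t) :
    IsGeodesicFrom (fun r => γ (s + r)) (γ s) (γ t) := by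
  have hd : ∀ a b : ℝ, dist (γ a) (γ b) = |a - b| := fun a b => by
    rw [hγ.dist_eq, Real.dist_eq]
  have hD : dist (γ s) (γ t) = t - s := by
    rw [hd, abs_of_nonpos (by linarith), neg_sub]
  refine ⟨by simp, ?_, ?_⟩
  · rw [hD]
    norm_num
  · intro a _ b _
    rw [hd]
    congr 1
    ring

/-- Points mapping to a boundary point escape every ball. -/
lemma escape_of_tendsto_boundary (hemb : IsOpenEmbedding ι) (x : X) {p : ℕ → X} {ξ : Y}
    (hξ : ξ ∉ Set.range ι) (hp : Tendsto (fun k => ι (p k)) atTop (𝓝 ξ)) :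
    Tendsto (fun k => dist (p k) x) atTop atTop := by
  by_contra h
  rw [tendsto_atTop] at h
  push_neg at h
  obtain ⟨R, hR⟩ := h
  have hR : ∃ᶠ k in atTop, ¬ (R ≤ dist (p k) x) := hR.mono fun k hk => not_le.2 hk
  have hfreq : ∃ᶠ k in atTop, p k ∈ Metric.closedBall x R := by
    refine hR.mono fun k hk => ?_
    rw [not_le] at hk
    rw [Metric.mem_closedBall]
    exact hk.le
  obtain ⟨z, -, φ, hφ, hlim⟩ := (isCompact_closedBall x R).tendsto_subseq' hfreq
  have h1 : Tendsto (fun k => ι (p (φ k))) atTop (𝓝 (ι z)) :=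
    (hemb.continuous.tendsto z).comp hlim
  have h2 : Tendsto (fun k => ι (p (φ k))) atTop (𝓝 ξ) := hp.comp hφ.tendsto_atTop
  exact hξ ⟨z, tendsto_nhds_unique h1 h2⟩

end Geo

section Main

variable {X Y : Type*} [MetricSpace X] [ProperSpace X]
  [TopologicalSpace Y] [T2Space Y] [SecondCountableTopology Y] [CompactSpace Y]
  {ι : X → Y}

/-- Lemma A: if two sequences stay at distance ≤ 1 and one converges to a boundary
point, so does the other. -/
lemma tendsto_of_close (hgeo : GeodesicSpace X) (hemb : IsOpenEmbedding ι)
    (hsv : StablyVisible ι) (x : X) {p q : ℕ → X} {ξ : Y}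
    (hξ : ξ ∉ Set.range ι) (hp : Tendsto (fun k => ι (p k)) atTop (𝓝 ξ))
    (hpq : ∀ k, dist (p k) (q k) ≤ 1) :
    Tendsto (fun k => ι (q k)) atTop (𝓝 ξ) := by
  have hdp := escape_of_tendsto_boundary hemb x hξ hp
  have hdq : Tendsto (fun k => dist (q k) x) atTop atTop := by
    have hle : ∀ k, dist (p k) x - 1 ≤ dist (q k) x := fun k => by
      have := dist_triangle (p k) (q k) x
      linarith [hpq k]
    exact tendsto_atTop_mono hle (tendsto_atTop_add_const_right _ (-1) hdp)
  haveI : NeBot (map (fun k => ι (q k)) atTop) := NeBot.map atTop_neBot _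
  refine tendsto_of_unique_clusterPt' fun ζ hζ => ?_
  obtain ⟨n, hn1, hn2⟩ := seq_of_mapClusterPt' (ζ := ζ) (u := fun k => ι (q k)) hζ id
  have hnT : Tendsto n atTop atTop := tendsto_atTop_mono hn1 tendsto_id
  -- ζ is a boundary point
  have hζr : ζ ∉ Set.range ι := by
    rintro ⟨z, rfl⟩
    have hq : Tendsto (fun k => q (n k)) atTop (𝓝 z) :=
      hemb.isInducing.tendsto_nhds_iff.2 hn2
    have h1 : Tendsto (fun k => dist (q (n k)) x) atTop (𝓝 (dist z x)) :=
      (hq.dist tendsto_const_nhds)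
    exact not_tendsto_atTop_of_tendsto_nhds h1 (hdq.comp hnT)
  -- ζ = ξ
  by_contra hne
  obtain ⟨f, hf⟩ : ∃ f : ℕ → ℝ → X, ∀ k, IsGeodesicFrom (f k) (q (n k)) (p (n k)) :=
    ⟨fun k => (hgeo (q (n k)) (p (n k))).choose, fun k => (hgeo _ _).choose_spec⟩
  obtain ⟨B, hB, hpts⟩ := hsv ξ ζ hξ hζr (fun h => hne h.symm)
    (fun k => q (n k)) (fun k => p (n k)) f hf hn2 (hp.comp hnT)
  obtain ⟨R, hR⟩ := hB.subset_closedBall x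
  have hev : ∀ᶠ k in atTop, R + 2 ≤ dist (q (n k)) x := (hdq.comp hnT).eventually_ge_atTop _
  obtain ⟨k, hk⟩ := hev.exists
  obtain ⟨r, hr, hrB⟩ := hpts k
  have hfd : dist (f k r) (q (n k)) = r := by
    have h0 : (0 : ℝ) ∈ Set.Icc (0 : ℝ) (dist (q (n k)) (p (n k))) :=
      ⟨le_refl _, dist_nonneg⟩
    have := (hf k).2.2 r hr 0 h0
    rw [(hf k).1] at this
    rw [this, sub_zero, abs_of_nonneg hr.1]
  have hrle : r ≤ 1 := le_trans hr.2 (by rw [dist_comm]; exact hpq (n k))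
  have hfar : R + 1 ≤ dist (f k r) x := by
    have := dist_triangle (q (n k)) (f k r) x
    rw [dist_comm (q (n k)) (f k r)] at this
    linarith
  have : dist (f k r) x ≤ R := hR hrB
  linarith

/-- Lemma B inner step: a geodesic line cannot accumulate at two distinct boundary
points at +∞. -/
lemma no_two_ends (hsv : StablyVisible ι) (x : X) {γ : ℝ → X} (hγ : Isometry γ)
    {ζ₁ ζ₂ : Y} (h1 : ζ₁ ∉ Set.range ι) (h2 : ζ₂ ∉ Set.range ι) (hne : ζ₁ ≠ ζ₂)
    {s t : ℕ → ℝ} (hs0 : ∀ k : ℕ, (k : ℝ) ≤ s k) (hst : ∀ k, s k ≤ t k)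
    (hs : Tendsto (fun k => ι (γ (s k))) atTop (𝓝 ζ₁))
    (ht : Tendsto (fun k => ι (γ (t k))) atTop (𝓝 ζ₂)) : False := by
  obtain ⟨B, hB, hpts⟩ := hsv ζ₂ ζ₁ h2 h1 (Ne.symm hne)
    (fun k => γ (s k)) (fun k => γ (t k)) (fun k r => γ (s k + r))
    (fun k => hγ.isGeodesicFrom (hst k)) hs ht
  obtain ⟨R, hR⟩ := hB.subset_closedBall x
  obtain ⟨k, hk⟩ := exists_nat_gt (R + dist (γ 0) x)
  obtain ⟨r, hr, hrB⟩ := hpts k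
  have hd : dist (γ (s k + r)) (γ 0) = |s k + r| := by
    rw [hγ.dist_eq, Real.dist_eq, sub_zero]
  have habs : s k + r ≤ |s k + r| := le_abs_self _
  have htri := dist_triangle (γ (s k + r)) x (γ 0)
  have hmem : dist (γ (s k + r)) x ≤ R := hR hrB
  have hks := hs0 k
  have hr0 := hr.1
  rw [hd, dist_comm x (γ 0)] at htri
  linarith


/-- Lemma B: both ends of any isometric line converge in the compactification,
to boundary points. -/
lemma ends_converge (hemb : IsOpenEmbedding ι) (hsv : StablyVisible ι) (x : X)
    {γ : ℝ → X} (hγ : Isometry γ) :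
    ∃ ξ, ξ ∉ Set.range ι ∧ Tendsto (fun t => ι (γ t)) atTop (𝓝 ξ) := by
  haveI : NeBot (map (fun t : ℝ => ι (γ t)) atTop) := NeBot.map atTop_neBot _
  -- every cluster point is a boundary point
  have hnr : ∀ ζ, ClusterPt ζ (map (fun t : ℝ => ι (γ t)) atTop) → ζ ∉ Set.range ι := by
    rintro ζ hζ ⟨z, rfl⟩
    obtain ⟨sq, hs1, hs2⟩ := seq_of_mapClusterPt' (ζ := ι z) (u := fun t : ℝ => ι (γ t)) hζ
      (fun k => (k : ℝ))
    have hq : Tendsto (fun k => γ (sq k)) atTop (𝓝 z) :=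
      hemb.isInducing.tendsto_nhds_iff.2 hs2
    have h1 : Tendsto (fun k => dist (γ (sq k)) (γ 0)) atTop (𝓝 (dist z (γ 0))) :=
      hq.dist tendsto_const_nhds
    have h2 : Tendsto (fun k => dist (γ (sq k)) (γ 0)) atTop atTop := by
      have heq : ∀ k : ℕ, (k : ℝ) ≤ dist (γ (sq k)) (γ 0) := fun k => by
        rw [hγ.dist_eq, Real.dist_eq, sub_zero]
        exact le_trans (hs1 k) (le_abs_self _)
      exact tendsto_atTop_mono heq tendsto_natCast_atTop_atTop
    exact not_tendsto_atTop_of_tendsto_nhds h1 h2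
  obtain ⟨ξ0, hξ0⟩ := exists_clusterPt_of_compactSpace (map (fun t : ℝ => ι (γ t)) atTop)
  refine ⟨ξ0, hnr ξ0 hξ0, tendsto_of_unique_clusterPt' fun ζ hζ => ?_⟩
  by_contra hne
  obtain ⟨sq, hs1, hs2⟩ := seq_of_mapClusterPt' (ζ := ζ) (u := fun t : ℝ => ι (γ t)) hζ
    (fun k => (k : ℝ))
  obtain ⟨tq, ht1, ht2⟩ := seq_of_mapClusterPt' (ζ := ξ0) (u := fun t : ℝ => ι (γ t)) hξ0
    (fun k => (k : ℝ))
  by_cases hcase : ∃ᶠ k in atTop, sq k ≤ tq k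
  · obtain ⟨φ, hφ, hφle⟩ := extraction_of_frequently_atTop hcase
    refine no_two_ends hsv x hγ (hnr ζ hζ) (hnr ξ0 hξ0) hne
      (s := sq ∘ φ) (t := tq ∘ φ) (fun k => le_trans ?_ (hs1 (φ k))) hφle
      (hs2.comp hφ.tendsto_atTop) (ht2.comp hφ.tendsto_atTop)
    exact_mod_cast Nat.cast_le.2 hφ.le_apply
  · have hfr : ∃ᶠ k in atTop, tq k ≤ sq k := by
      rw [not_frequently] at hcase
      refine (hcase.mono fun k hk => ?_).frequently
      push_neg at hk
      exact hk.le
    obtain ⟨φ, hφ, hφle⟩ := extraction_of_frequently_atTop hfr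
    refine no_two_ends hsv x hγ (hnr ξ0 hξ0) (hnr ζ hζ) (Ne.symm hne)
      (s := tq ∘ φ) (t := sq ∘ φ) (fun k => le_trans ?_ (ht1 (φ k))) hφle
      (ht2.comp hφ.tendsto_atTop) (hs2.comp hφ.tendsto_atTop)
    exact_mod_cast Nat.cast_le.2 hφ.le_apply

/-- Lemma C: if a line `γ` is a pointwise cluster point of lines `γs j` whose forward
endpoints tend to `ξ`, then the forward endpoint of `γ` is `ξ`. -/
lemma cluster_end_eq (hgeo : GeodesicSpace X) (hemb : IsOpenEmbedding ι)
    (hsv : StablyVisible ι) (x : X) {ξ ξ' : Y}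
    (hξ : ξ ∉ Set.range ι) (hξ' : ξ' ∉ Set.range ι)
    {ξs : ℕ → Y} (hξs : Tendsto ξs atTop (𝓝 ξ))
    {γs : ℕ → ℝ → X} (hiso : ∀ j, Isometry (γs j))
    (hlim : ∀ j, Tendsto (fun t => ι (γs j t)) atTop (𝓝 (ξs j)))
    {m : ℝ} (hm : ∀ j, dist (γs j 0) x ≤ m)
    {γ : ℝ → X} (hγ : Isometry γ)
    (hcl : MapClusterPt γ atTop γs)
    (hγξ' : Tendsto (fun t => ι (γ t)) atTop (𝓝 ξ')) : ξ' = ξ := by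
  by_contra hne
  obtain ⟨V, hVo, hVm, hVa, hVb⟩ := exists_open_antitone_basis' ξ
  have hJ : ∀ k : ℕ, ∃ J, ∀ j ≥ J, ξs j ∈ V k := fun k =>
    eventually_atTop.1 (hξs ((hVo k).mem_nhds (hVm k)))
  choose J hJ using hJ
  have hjex : ∀ k : ℕ, ∃ j, max k (J k) ≤ j ∧ dist (γs j (k : ℝ)) (γ (k : ℝ)) ≤ 1 := by
    intro k
    have hU : {f : ℝ → X | dist (f (k : ℝ)) (γ (k : ℝ)) < 1} ∈ 𝓝 γ := by
      have hc : Continuous fun f : ℝ → X => dist (f (k : ℝ)) (γ (k : ℝ)) :=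
        (continuous_apply ((k : ℝ))).dist continuous_const
      have ho : IsOpen {f : ℝ → X | dist (f (k : ℝ)) (γ (k : ℝ)) < 1} :=
        isOpen_lt hc continuous_const
      refine ho.mem_nhds ?_
      simp
    have hfr := mapClusterPt_iff_frequently.1 hcl _ hU
    obtain ⟨j, hj1, hj2⟩ := frequently_atTop.1 hfr (max k (J k))
    exact ⟨j, hj1, le_of_lt hj2⟩
  choose j hj1 hj2 using hjex
  have htex : ∀ k : ℕ, ∃ t : ℝ, (k : ℝ) ≤ t ∧ ι (γs (j k) t) ∈ V k := by
    intro k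
    have h1 : ξs (j k) ∈ V k := hJ k (j k) (le_trans (le_max_right _ _) (hj1 k))
    have h2 : ∀ᶠ t in atTop, ι (γs (j k) t) ∈ V k := hlim (j k) ((hVo k).mem_nhds h1)
    obtain ⟨t, ht⟩ := ((eventually_ge_atTop ((k : ℝ))).and h2).exists
    exact ⟨t, ht.1, ht.2⟩
  choose t ht1 ht2 using htex
  have hb : Tendsto (fun k => ι (γs (j k) (t k))) atTop (𝓝 ξ) :=
    tendsto_of_mem_basis' hVa hVb ht2
  have ha : Tendsto (fun k => ι (γs (j k) ((k : ℝ)))) atTop (𝓝 ξ') := by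
    refine tendsto_of_close hgeo hemb hsv x hξ'
      (p := fun k => γ ((k : ℝ))) (q := fun k => γs (j k) ((k : ℝ)))
      (hγξ'.comp tendsto_natCast_atTop_atTop) (fun k => ?_)
    rw [dist_comm]
    exact hj2 k
  obtain ⟨B, hB, hpts⟩ := hsv ξ ξ' hξ hξ' (fun h => hne h.symm)
    (fun k => γs (j k) ((k : ℝ))) (fun k => γs (j k) (t k))
    (fun k r => γs (j k) ((k : ℝ) + r))
    (fun k => (hiso (j k)).isGeodesicFrom (ht1 k)) ha hb
  obtain ⟨R, hR⟩ := hB.subset_closedBall x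
  obtain ⟨k, hk⟩ := exists_nat_gt (R + m)
  obtain ⟨r, hr, hrB⟩ := hpts k
  have hd : dist (γs (j k) ((k : ℝ) + r)) (γs (j k) 0) = |(k : ℝ) + r| := by
    rw [(hiso (j k)).dist_eq, Real.dist_eq, sub_zero]
  have htri := dist_triangle (γs (j k) ((k : ℝ) + r)) x (γs (j k) 0)
  have hmem : dist (γs (j k) ((k : ℝ) + r)) x ≤ R := hR hrB
  have habs : (k : ℝ) + r ≤ |(k : ℝ) + r| := le_abs_self _
  have hm' := hm (j k)
  have hr0 := hr.1
  rw [hd, dist_comm x (γs (j k) 0)] at htri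
  linarith

/-- The auxiliary closed sets. -/
def shat (ι : X → Y) (x : X) (q : ℝ≥0∞) (m : ℝ) : Set (Y × Y) :=
  {p | p.1 ∉ Set.range ι ∧ p.2 ∉ Set.range ι ∧
    ∃ γ : ℝ → X, Isometry γ ∧ Tendsto (fun t => ι (γ t)) atTop (𝓝 p.1) ∧
      Tendsto (fun t => ι (γ t)) atBot (𝓝 p.2) ∧
      q ≤ EMetric.infEdist x (Set.range γ) ∧ dist (γ 0) x ≤ m}

lemma isClosed_shat (hgeo : GeodesicSpace X) (hemb : IsOpenEmbedding ι)
    (hsv : StablyVisible ι) (x : X) (q : ℝ≥0∞) (m : ℝ) :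
    IsClosed (shat ι x q m) := by
  refine IsSeqClosed.isClosed fun u P hu hP => ?_
  have h1 : Tendsto (fun n => (u n).1) atTop (𝓝 P.1) :=
    (continuous_fst.tendsto P).comp hP
  have h2 : Tendsto (fun n => (u n).2) atTop (𝓝 P.2) :=
    (continuous_snd.tendsto P).comp hP
  have hcl : IsClosed ((Set.range ι)ᶜ) := hemb.isOpen_range.isClosed_compl
  have hP1r : P.1 ∉ Set.range ι :=
    hcl.mem_of_tendsto h1 (Eventually.of_forall fun n => (hu n).1)
  have hP2r : P.2 ∉ Set.range ι :=
    hcl.mem_of_tendsto h2 (Eventually.of_forall fun n => (hu n).2.1)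
  choose γs hiso hT hBt hq hm using fun n => (hu n).2.2
  -- a compact set containing all the lines
  set K : Set (ℝ → X) :=
    (Set.pi Set.univ fun s : ℝ => Metric.closedBall x (m + |s|)) ∩
      ({f : ℝ → X | ∀ a b : ℝ, dist (f a) (f b) = dist a b} ∩
        ({f : ℝ → X | dist (f 0) x ≤ m} ∩ {f : ℝ → X | ∀ s : ℝ, q ≤ edist x (f s)}))
    with hKdef
  have hKclosed : IsClosed (({f : ℝ → X | ∀ a b : ℝ, dist (f a) (f b) = dist a b} ∩
      ({f : ℝ → X | dist (f 0) x ≤ m} ∩ {f : ℝ → X | ∀ s : ℝ, q ≤ edist x (f s)}))) := by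
    refine IsClosed.inter ?_ (IsClosed.inter ?_ ?_)
    · have : {f : ℝ → X | ∀ a b : ℝ, dist (f a) (f b) = dist a b} =
          ⋂ (a : ℝ) (b : ℝ), {f : ℝ → X | dist (f a) (f b) = dist a b} := by
        ext f; simp [Set.mem_iInter]
      rw [this]
      exact isClosed_iInter fun a => isClosed_iInter fun b =>
        isClosed_eq ((continuous_apply a).dist (continuous_apply b)) continuous_const
    · exact isClosed_le ((continuous_apply (0 : ℝ)).dist continuous_const) continuous_const
    · have : {f : ℝ → X | ∀ s : ℝ, q ≤ edist x (f s)} =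
          ⋂ (s : ℝ), {f : ℝ → X | q ≤ edist x (f s)} := by
        ext f; simp [Set.mem_iInter]
      rw [this]
      exact isClosed_iInter fun s =>
        isClosed_le continuous_const (continuous_const.edist (continuous_apply s))
  have hKcomp : IsCompact K :=
    ((isCompact_univ_pi fun s => isCompact_closedBall x (m + |s|)).inter_right hKclosed)
  have hmemK : ∀ n, γs n ∈ K := by
    intro n
    refine ⟨fun s _ => ?_, fun a b => (hiso n).dist_eq a b, hm n, fun s => ?_⟩
    · rw [Metric.mem_closedBall]
      have htri := dist_triangle (γs n s) (γs n 0) x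
      have : dist (γs n s) (γs n 0) = |s| := by
        rw [(hiso n).dist_eq, Real.dist_eq, sub_zero]
      rw [this] at htri
      linarith [hm n]
    · exact le_trans (hq n) (EMetric.infEdist_le_edist_of_mem ⟨s, rfl⟩)
  have hle : map γs atTop ≤ 𝓟 K := le_principal_iff.2 (mem_map.2
    (Eventually.of_forall hmemK))
  haveI : NeBot (map γs atTop) := NeBot.map atTop_neBot _
  obtain ⟨γ, hγK, hγcl⟩ := hKcomp.exists_clusterPt hle
  have hγiso : Isometry γ := Isometry.of_dist_eq hγK.2.1
  have hγm : dist (γ 0) x ≤ m := hγK.2.2.1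
  have hγq : q ≤ EMetric.infEdist x (Set.range γ) := by
    refine EMetric.le_infEdist.2 ?_
    rintro y ⟨s, rfl⟩
    exact hγK.2.2.2 s
  -- forward endpoint
  obtain ⟨ξ', hξ'r, hξ't⟩ := ends_converge hemb hsv x hγiso
  have hfwd : ξ' = P.1 :=
    cluster_end_eq hgeo hemb hsv x hP1r hξ'r h1 hiso hT hm hγiso hγcl hξ't
  -- backward endpoint, via reversal
  set rev : (ℝ → X) → (ℝ → X) := fun f s => f (-s) with hrev
  have hrevc : Continuous rev := continuous_pi fun s => continuous_apply (-s)
  have hγcl' : MapClusterPt (rev γ) atTop (fun n => rev (γs n)) := by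
    have hmap : Tendsto rev (map γs atTop) (map (fun n => rev (γs n)) atTop) :=
      le_of_eq (map_map (m := γs) (m' := rev))
    exact hγcl.map hrevc.continuousAt hmap
  have hreviso : ∀ n, Isometry (rev (γs n)) := fun n => Isometry.of_dist_eq fun a b => by
    simp only [hrev]
    rw [(hiso n).dist_eq, Real.dist_eq, Real.dist_eq]
    rw [neg_sub_neg, abs_sub_comm]
  have hreviso' : Isometry (rev γ) := Isometry.of_dist_eq fun a b => by
    simp only [hrev]
    rw [hγiso.dist_eq, Real.dist_eq, Real.dist_eq, neg_sub_neg, abs_sub_comm]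
  have hrevT : ∀ n, Tendsto (fun s => ι (rev (γs n) s)) atTop (𝓝 ((u n).2)) := fun n =>
    (hBt n).comp tendsto_neg_atTop_atBot
  have hrevm : ∀ n, dist (rev (γs n) 0) x ≤ m := fun n => by
    simp only [hrev, neg_zero]
    exact hm n
  obtain ⟨η', hη'r, hη't⟩ := ends_converge hemb hsv x hreviso'
  have hbwd : η' = P.2 :=
    cluster_end_eq hgeo hemb hsv x hP2r hη'r h2 hreviso hrevT hrevm hreviso' hγcl' hη't
  have hγbot : Tendsto (fun s => ι (γ s)) atBot (𝓝 P.2) := by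
    have := hη't.comp (tendsto_neg_atBot_atTop (G := ℝ))
    rw [hbwd] at this
    simp only [hrev, Function.comp_def, neg_neg] at this
    exact this
  exact ⟨hP1r, hP2r, γ, hγiso, hfwd ▸ hξ't, hγbot, hγq, hγm⟩

end Main


/-- **Measurability of the pencil distance function.**  Let `X` be a proper geodesic
metric space with a stably visible compactification `ι : X → Y`.  Then for each `x ∈ X`
the function `D : ∂X × ∂X → ℝ ∪ {∞}`, `D(ξ,η) = sup_{γ ∈ P(ξ,η)} d(x, γ)` (equal to `∞`
when `P(ξ,η) = ∅`), is Borel measurable. -/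
theorem stmt_7 {X Y : Type*} [MetricSpace X] [ProperSpace X] (hgeo : GeodesicSpace X)
    [TopologicalSpace Y] [T2Space Y] [SecondCountableTopology Y] [CompactSpace Y]
    [MeasurableSpace Y] [BorelSpace Y]
    (ι : X → Y) (hemb : IsOpenEmbedding ι) (hdense : DenseRange ι)
    (hsv : StablyVisible ι) (x : X) :
    Measurable (fun p : {y : Y // y ∉ Set.range ι} × {y : Y // y ∉ Set.range ι} =>
      pencilSup x (pencil ι) p.1.1 p.2.1) := by
  apply measurable_of_Ioi
  intro c
  rcases eq_or_ne c ⊤ with rfl | hc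
  · have : (fun p : {y : Y // y ∉ Set.range ι} × {y : Y // y ∉ Set.range ι} =>
        pencilSup x (pencil ι) p.1.1 p.2.1) ⁻¹' Set.Ioi ⊤ = ∅ := by
      ext p
      simp [Set.mem_preimage, not_top_lt]
    rw [this]
    exact MeasurableSet.empty
  have hc' : c < ⊤ := hc.lt_top
  set pr : {y : Y // y ∉ Set.range ι} × {y : Y // y ∉ Set.range ι} → Y × Y :=
    fun p => (p.1.1, p.2.1) with hpr
  have hprm : Measurable pr :=
    (measurable_subtype_coe.comp measurable_fst).prodMk
      (measurable_subtype_coe.comp measurable_snd)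
  have hmeas : ∀ (q : ℝ≥0∞) (m : ℝ), MeasurableSet (pr ⁻¹' shat ι x q m) := fun q m =>
    hprm ((isClosed_shat hgeo hemb hsv x q m).measurableSet)
  -- key identity
  have hEq : (fun p : {y : Y // y ∉ Set.range ι} × {y : Y // y ∉ Set.range ι} =>
      pencilSup x (pencil ι) p.1.1 p.2.1) ⁻¹' Set.Ioi c =
      (pr ⁻¹' (⋃ m : ℕ, shat ι x 0 (m : ℝ)))ᶜ ∪
        ⋃ (r : ℚ) (m : ℕ), {p : {y : Y // y ∉ Set.range ι} × {y : Y // y ∉ Set.range ι} |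
          c < (Real.toNNReal r : ℝ≥0∞)} ∩ pr ⁻¹' shat ι x (Real.toNNReal r) (m : ℝ) := by
    ext p
    simp only [Set.mem_preimage, Set.mem_Ioi, Set.mem_union, Set.mem_compl_iff,
      Set.mem_iUnion, Set.mem_inter_iff, Set.mem_setOf_eq]
    constructor
    · intro hD
      by_cases hpe : pencil ι p.1.1 p.2.1 = ∅
      · left
        rintro ⟨m, hm⟩
        obtain ⟨-, -, γ, hγ1, hγ2, hγ3, -, -⟩ := hm
        exact absurd hpe (Set.nonempty_iff_ne_empty.1 ⟨γ, hγ1, hγ2, hγ3⟩)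
      · right
        rw [pencilSup, if_neg hpe] at hD
        obtain ⟨γ, hγ⟩ := lt_iSup_iff.1 hD
        obtain ⟨hγP, hγd⟩ := lt_iSup_iff.1 hγ
        obtain ⟨r, -, hr1, hr2⟩ := ENNReal.lt_iff_exists_rat_btwn.1 hγd
        exact ⟨r, ⌈dist (γ 0) x⌉₊, hr1, p.1.2, p.2.2, γ, hγP.1, hγP.2.1, hγP.2.2,
          hr2.le, Nat.le_ceil _⟩
    · rintro (hne | ⟨r, m, hcr, hmem⟩)
      · have hpe : pencil ι p.1.1 p.2.1 = ∅ := by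
          rw [Set.eq_empty_iff_forall_notMem]
          rintro γ ⟨hγ1, hγ2, hγ3⟩
          exact hne ⟨⌈dist (γ 0) x⌉₊, p.1.2, p.2.2, γ, hγ1, hγ2, hγ3, zero_le,
            Nat.le_ceil _⟩
        rw [pencilSup, if_pos hpe]
        exact hc'
      · obtain ⟨-, -, γ, hγ1, hγ2, hγ3, hγq, -⟩ := hmem
        have hγP : γ ∈ pencil ι p.1.1 p.2.1 := ⟨hγ1, hγ2, hγ3⟩
        have hpe : pencil ι p.1.1 p.2.1 ≠ ∅ :=
          Set.nonempty_iff_ne_empty.1 ⟨γ, hγP⟩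
        rw [pencilSup, if_neg hpe]
        refine lt_of_lt_of_le hcr (le_trans hγq ?_)
        exact le_iSup₂ (f := fun γ (_ : γ ∈ pencil ι p.1.1 p.2.1) =>
          EMetric.infEdist x (Set.range γ)) γ hγP
  rw [hEq]
  refine MeasurableSet.union ?_ ?_
  · rw [Set.preimage_iUnion]
    exact (MeasurableSet.iUnion (fun m : ℕ => hmeas 0 (m : ℝ))).compl
  · refine MeasurableSet.iUnion fun r => MeasurableSet.iUnion fun m => ?_
    rcases lt_or_ge c ((Real.toNNReal r : ℝ≥0∞)) with h | h
    · have he : {p : {y : Y // y ∉ Set.range ι} × {y : Y // y ∉ Set.range ι} |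
          c < (Real.toNNReal r : ℝ≥0∞)} = Set.univ := Set.eq_univ_of_forall fun _ => h
      rw [he, Set.univ_inter]
      exact hmeas _ _
    · have he : {p : {y : Y // y ∉ Set.range ι} × {y : Y // y ∉ Set.range ι} |
          c < (Real.toNNReal r : ℝ≥0∞)} = ∅ :=
        Set.eq_empty_iff_forall_notMem.2 fun _ hx => absurd hx (not_lt.2 h)
      rw [he, Set.empty_inter]
      exact MeasurableSet.empty
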